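/- As an identity of formal power series in two variables x, y: Σ_{n≥1} Σ_{k=0}^{n-1} S(n,k) x^n y^k = Σ_{n≥1} x^n (1+xy)^{n(n-1)/2} / Π_{k=0}^{n-1} (1 - (1+xy)^k x y), where S(n,k) is the number of admissible sequences of length n with n-k left-to-right maxima. -/

import Mathlib

open Finset

/-- A partial matching of `[m]`: a set of arcs `(i,j)` with `1 ≤ i < j ≤ m`
such that every vertex belongs to at most one arc. -/
def IsMatching (m : ℕ) (M : Finset (ℕ × ℕ)) : Prop :=
  (∀ p ∈ M, 1 ≤ p.1 ∧ p.1 < p.2 ∧ p.2 ≤ m) ∧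
  ∀ p ∈ M, ∀ q ∈ M, p ≠ q → p.1 ≠ q.1 ∧ p.1 ≠ q.2 ∧ p.2 ≠ q.1 ∧ p.2 ≠ q.2

/-- The linear (arc) diagram of a partition of `[n]`: every vertex is the left
endpoint of at most one arc and the right endpoint of at most one arc. -/
def IsPartitionDiagram (n : ℕ) (P : Finset (ℕ × ℕ)) : Prop :=
  (∀ p ∈ P, 1 ≤ p.1 ∧ p.1 < p.2 ∧ p.2 ≤ n) ∧
  ∀ p ∈ P, ∀ q ∈ P, p ≠ q → p.1 ≠ q.1 ∧ p.2 ≠ q.2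

/-- A 2-right crossing: arcs `(i1,j1)`, `(i2,j2)` with `i1<i2<j1<j2` and `j2-j1 ≤ 2`. -/
def Has2RightCrossing (M : Finset (ℕ × ℕ)) : Prop :=
  ∃ p ∈ M, ∃ q ∈ M, p.1 < q.1 ∧ q.1 < p.2 ∧ p.2 < q.2 ∧ q.2 ≤ p.2 + 2

/-- A right crossing: arcs `(i1,j1)`, `(i2,j2)` with `i1<i2<j1<j2` and `j2 = j1+1`. -/
def HasRightCrossing (M : Finset (ℕ × ℕ)) : Prop :=
  ∃ p ∈ M, ∃ q ∈ M, p.1 < q.1 ∧ q.1 < p.2 ∧ p.2 < q.2 ∧ q.2 = p.2 + 1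

/-- A right nesting: arcs `(i1,j1)`, `(i2,j2)` with `i1<i2<j2<j1` and `j1 = j2+1`. -/
def HasRightNesting (M : Finset (ℕ × ℕ)) : Prop :=
  ∃ p ∈ M, ∃ q ∈ M, p.1 < q.1 ∧ q.1 < q.2 ∧ q.2 < p.2 ∧ p.2 = q.2 + 1

/-- `P(m,k)`: partial matchings of `[m]` with `k` arcs avoiding 2-right crossings
and right nestings. -/
def PMSet (m k : ℕ) : Set (Finset (ℕ × ℕ)) :=
  {M | IsMatching m M ∧ M.card = k ∧ ¬ Has2RightCrossing M ∧ ¬ HasRightNesting M}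

/-- `CT(n,k)`: partitions of `[n]` with `k` arcs avoiding right crossings. -/
def CTSet (n k : ℕ) : Set (Finset (ℕ × ℕ)) :=
  {P | IsPartitionDiagram n P ∧ P.card = k ∧ ¬ HasRightCrossing P}

/-- `lmax x i = max(x_0, …, x_{i-1})` (with value `0` when `i = 0`). -/
def lmax (x : ℕ → ℕ) (i : ℕ) : ℕ := (Finset.range i).sup x

/-- `x_i` is a left-to-right maximum (with `x_0` always counted as one). -/
def IsLTRMax (x : ℕ → ℕ) (i : ℕ) : Prop := i = 0 ∨ lmax x i < x i

/-- `S(n,k)`: sequences `x_0 … x_{n-1}` (extended by `0`) with `x_0 = 0`,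
`0 ≤ x_i ≤ max(x_0…x_{i-1})+1`, `x_i < x_{i-1}` whenever `x_i < max(x_0…x_{i-1})`,
and exactly `n-k` left-to-right maxima. -/
def SeqSet (n k : ℕ) : Set (ℕ → ℕ) :=
  {x | (∀ i, n ≤ i → x i = 0) ∧ x 0 = 0 ∧
       (∀ i, 1 ≤ i → i < n → x i ≤ lmax x i + 1) ∧
       (∀ i, 1 ≤ i → i < n → x i < lmax x i → x i < x (i - 1)) ∧
       ((Finset.range n).filter (fun i => i = 0 ∨ lmax x i < x i)).card = n - k}
open MvPowerSeries in
/-- The generating-function term `x^n (1+xy)^{C(n,2)} / ∏_{k=0}^{n-1}(1-(1+xy)^k xy)`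
in `ℚ[[x,y]]`, with `x = X 0`, `y = X 1`. -/
noncomputable def gfTerm (n : ℕ) : MvPowerSeries (Fin 2) ℚ :=
  (X 0 : MvPowerSeries (Fin 2) ℚ) ^ n * (1 + X 0 * X 1) ^ (n.choose 2) *
    ∏ k ∈ Finset.range n, (1 - (1 + X 0 * X 1) ^ k * X 0 * X 1)⁻¹




section Univ
open PowerSeries Finset
noncomputable section

def gg (m : ℕ) : PowerSeries ℚ := (1 + X)^m * (1 - X*(1+X)^m)⁻¹

lemma const_am (m : ℕ) : constantCoeff (R := ℚ) (1 - X*(1+X)^m) ≠ 0 := by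
  simp [map_sub, map_mul]

lemma gg_mul (m : ℕ) : gg m * (1 - X*(1+X)^m) = (1+X)^m := by
  rw [gg, mul_assoc, PowerSeries.inv_mul_cancel _ (const_am m), mul_one]

def Vv (m c : ℕ) : PowerSeries ℚ := (1 + X)^c * (1 + X * gg m)

lemma Vv_mm (m : ℕ) : Vv m m = gg m := by
  have hu : IsUnit (1 - X*(1+X)^m : PowerSeries ℚ) :=
    IsUnit.of_mul_eq_one _ (PowerSeries.mul_inv_cancel _ (const_am m))
  apply hu.mul_right_cancel
  have h1 : (1 + X * gg m) * (1 - X*(1+X)^m) = 1 := by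
    have h2 : (1 + X * gg m) * (1 - X*(1+X)^m)
        = (1 - X*(1+X)^m) + X * (gg m * (1 - X*(1+X)^m)) := by ring
    rw [h2, gg_mul]; ring
  rw [gg_mul, Vv, mul_assoc, h1, mul_one]

lemma Vv_rec (m c : ℕ) :
    Vv m c = 1 + X * (gg m + ∑ v ∈ range c, Vv m v) := by
  induction c with
  | zero => simp [Vv]
  | succ c ih =>
      have h : Vv m (c+1) = Vv m c + X * Vv m c := by rw [Vv, Vv]; ring
      rw [h, sum_range_succ, ih]; ring

def Sser (m c j : ℕ) : PowerSeries ℚ := X^j * Vv m c * ∏ i ∈ range j, gg (m+1+i)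

lemma Sser_rec (m c j : ℕ) :
    Sser m c j = (if j = 0 then 1 else X * Sser (m+1) (m+1) (j-1))
      + X * Sser m m j + X * ∑ v ∈ range c, Sser m v j := by
  have key : (X^j * ∏ i ∈ range j, gg (m+1+i) : PowerSeries ℚ)
      = (if j = 0 then 1 else X * Sser (m+1) (m+1) (j-1)) := by
    cases j with
    | zero => simp
    | succ j =>
        simp only [Nat.succ_ne_zero, if_false, Nat.succ_sub_one]
        rw [Sser, Vv_mm]
        have hp : (∏ i ∈ range (j+1), gg (m+1+i))
            = gg (m+1) * ∏ i ∈ range j, gg (m+1+1+i) := by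
          rw [Finset.prod_range_succ', mul_comm, add_zero]
          congr 1
          exact Finset.prod_congr rfl (fun x _ => by rw [show m+1+1+x = m+1+(x+1) from by omega])
        rw [hp]; ring
  have hs : X * ∑ v ∈ range c, Sser m v j
      = X * (X ^ j * (∑ v ∈ range c, Vv m v) * ∏ i ∈ range j, gg (m + 1 + i)) := by
    congr 1
    rw [Finset.mul_sum, Finset.sum_mul]
    apply Finset.sum_congr rfl
    intro v _
    rw [Sser]
  rw [hs, ← key, Sser, Vv_rec, Sser, Vv_mm]
  ring

def Nn : ℕ → ℕ → ℕ → ℕ → ℕ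
  | 0, _, _, j => if j = 0 then 1 else 0
  | (r+1), m, c, j =>
      (match j with | 0 => 0 | (j'+1) => Nn r (m+1) (m+1) j')
      + Nn r m m j + ∑ v ∈ range c, Nn r m v j

lemma coeff_Sser (r : ℕ) : ∀ m c j, (Nn r m c j : ℚ) = coeff (R := ℚ) r (Sser m c j) := by
  induction r with
  | zero =>
      intro m c j
      cases j with
      | zero => simp [Nn, Sser, Vv, PowerSeries.coeff_zero_eq_constantCoeff]
      | succ j =>
          simp [Nn, Sser, PowerSeries.coeff_zero_eq_constantCoeff, pow_succ, map_mul, mul_assoc]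
  | succ r ih =>
      intro m c j
      rw [Sser_rec, map_add, map_add, PowerSeries.coeff_succ_X_mul, PowerSeries.coeff_succ_X_mul,
        map_sum]
      have h1 : (coeff (R := ℚ) (r+1)) ((if j = 0 then (1:PowerSeries ℚ) else X * Sser (m+1) (m+1) (j-1)))
          = (match j with | 0 => (0:ℚ) | (j'+1) => (Nn r (m+1) (m+1) j' : ℚ)) := by
        cases j with
        | zero => simp
        | succ j =>
            simp only [Nat.succ_ne_zero, if_false, Nat.succ_sub_one]
            rw [PowerSeries.coeff_succ_X_mul]
            exact (ih _ _ _).symm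
      rw [h1]
      show ((Nn (r+1) m c j : ℕ) : ℚ) = _
      simp only [Nn]
      push_cast
      rw [ih m m j]
      congr 1
      · cases j <;> simp
      · apply Finset.sum_congr rfl
        intro v _
        exact ih m v j


def Fser (n : ℕ) : PowerSeries ℚ := ∏ k ∈ range n, gg k

lemma Sser00 (j : ℕ) : Sser 0 0 j = X^j * Fser (j+1) := by
  rw [Sser, Vv_mm, Fser, Finset.prod_range_succ']
  have : ∀ i, (0:ℕ)+1+i = i+1 := by intro i; omega
  rw [mul_assoc]
  congr 1
  rw [mul_comm]
  congr 1
  exact Finset.prod_congr rfl (fun i _ => by rw [this i])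

lemma Nn_eq_coeff_Fser (n b : ℕ) (hn : 1 ≤ n) :
    (Nn (n-1+b) 0 0 (n-1) : ℚ) = PowerSeries.coeff (R := ℚ) b (Fser n) := by
  rw [coeff_Sser, Sser00]
  have h : n - 1 + b = b + (n-1) := by omega
  rw [h, PowerSeries.coeff_X_pow_mul, show n - 1 + 1 = n from by omega]

lemma Fser_rec (n : ℕ) :
    Fser (n+1) = (1+X)^n * Fser n + X * ((1+X)^n * Fser (n+1)) := by
  have hg : gg n = (1+X)^n + X*(1+X)^n * gg n := by
    have h := gg_mul n
    linear_combination h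
  have h1 : Fser (n+1) = Fser n * gg n := Finset.prod_range_succ _ _
  calc Fser (n+1) = Fser n * gg n := h1
    _ = Fser n * ((1+X)^n + X*(1+X)^n * gg n) := by rw [← hg]
    _ = (1+X)^n * Fser n + X * ((1+X)^n * (Fser n * gg n)) := by ring
    _ = (1+X)^n * Fser n + X * ((1+X)^n * Fser (n+1)) := by rw [← h1]

lemma coeff_expand1 (t n b : ℕ) (φ : PowerSeries ℚ) :
    PowerSeries.coeff (R := ℚ) b (X^t * (1+X)^n * φ) =
      ∑ j ∈ Finset.range (n+1), (n.choose j : ℚ) *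
        (if t+j ≤ b then PowerSeries.coeff (R := ℚ) (b-(t+j)) φ else 0) := by
  have hbin : ((1 + X : PowerSeries ℚ)) ^ n
      = ∑ j ∈ Finset.range (n+1), ((n.choose j : ℚ) • (X^j : PowerSeries ℚ)) := by
    rw [add_comm, add_pow]
    apply Finset.sum_congr rfl
    intro j _
    rw [one_pow, mul_one, Nat.cast_smul_eq_nsmul, nsmul_eq_mul]
    push_cast
    ring
  rw [hbin, Finset.mul_sum, Finset.sum_mul, map_sum]
  apply Finset.sum_congr rfl
  intro j _
  have harr : X^t * ((n.choose j : ℚ) • (X^j : PowerSeries ℚ)) * φ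
      = (n.choose j : ℚ) • ((X^(t+j) : PowerSeries ℚ) * φ) := by
    simp only [smul_mul_assoc, mul_smul_comm]
    congr 1
    rw [pow_add]
  rw [harr, map_smul, PowerSeries.coeff_X_pow_mul']
  simp [smul_eq_mul]

end
end Univ
section Biv
open Finset
noncomputable section
open MvPowerSeries

def ee (a b : ℕ) : Fin 2 →₀ ℕ := Finsupp.single 0 a + Finsupp.single 1 b

lemma ee_apply0 (a b : ℕ) : ee a b 0 = a := by simp [ee]
lemma ee_apply1 (a b : ℕ) : ee a b 1 = b := by simp [ee]

lemma ee_le (p q a b : ℕ) : ee p q ≤ ee a b ↔ p ≤ a ∧ q ≤ b := by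
  constructor
  · intro h
    exact ⟨by simpa [ee_apply0] using h 0, by simpa [ee_apply1] using h 1⟩
  · intro ⟨h1, h2⟩ i
    fin_cases i
    · simpa [ee_apply0] using h1
    · simpa [ee_apply1] using h2

lemma ee_sub (p q a b : ℕ) : ee a b - ee p q = ee (a-p) (b-q) := by
  ext i
  fin_cases i
  · simp [Finsupp.tsub_apply, ee_apply0]
  · simp [Finsupp.tsub_apply, ee_apply1]

lemma ee_eq_zero (a b : ℕ) : ee a b = 0 ↔ a = 0 ∧ b = 0 := by
  constructor
  · intro h
    constructor
    · have := ee_apply0 a b; rw [h] at this; simpa using this.symm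
    · have := ee_apply1 a b; rw [h] at this; simpa using this.symm
  · rintro ⟨rfl, rfl⟩; simp [ee]

lemma coeff_mono_mul (p q a b : ℕ) (φ : MvPowerSeries (Fin 2) ℚ) :
    coeff (R := ℚ) (ee a b) ((X 0)^p * (X 1)^q * φ) =
      if p ≤ a ∧ q ≤ b then coeff (R := ℚ) (ee (a-p) (b-q)) φ else 0 := by
  have h : ((X 0)^p * (X 1)^q : MvPowerSeries (Fin 2) ℚ) = monomial (R := ℚ) (ee p q) 1 := by
    rw [X_pow_eq, X_pow_eq, monomial_mul_monomial, one_mul]; rfl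
  rw [h, coeff_monomial_mul, ee_sub]
  by_cases hle : p ≤ a ∧ q ≤ b
  · rw [if_pos ((ee_le p q a b).2 hle), if_pos hle, one_mul]
  · rw [if_neg (fun hc => hle ((ee_le p q a b).1 hc)), if_neg hle]

abbrev xx : MvPowerSeries (Fin 2) ℚ := X 0
abbrev yy : MvPowerSeries (Fin 2) ℚ := X 1

lemma gfTerm_eq (n : ℕ) :
    gfTerm n = xx ^ n * (1 + xx*yy) ^ (n.choose 2) *
      ∏ k ∈ Finset.range n, (1 - (1 + xx*yy) ^ k * (xx*yy))⁻¹ := by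
  rw [gfTerm]
  congr 1
  apply Finset.prod_congr rfl
  intro k _
  rw [mul_assoc]

lemma const_A2 (k : ℕ) :
    constantCoeff (σ := Fin 2) (R := ℚ) (1 - (1 + xx*yy) ^ k * (xx*yy)) ≠ 0 := by
  simp [map_sub, map_mul, constantCoeff_X]

lemma gfTerm_key (n : ℕ) :
    gfTerm (n+1) * (1 - (1 + xx*yy) ^ n * (xx*yy)) =
      xx * (1 + xx*yy) ^ n * gfTerm n := by
  have hch : (n+1).choose 2 = n + n.choose 2 := by
    rw [Nat.choose_succ_succ]
    simp [Nat.choose_one_right, Nat.add_comm]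
  have hc : (1 - (1 + xx*yy) ^ n * (xx*yy))⁻¹ *
      (1 - (1 + xx*yy) ^ n * (xx*yy)) = 1 :=
    MvPowerSeries.inv_mul_cancel _ (const_A2 n)
  rw [gfTerm_eq, gfTerm_eq, Finset.prod_range_succ, hch, pow_add]
  linear_combination (xx^(n+1) * ((1 + xx*yy)^n * (1 + xx*yy)^(n.choose 2)) *
    ∏ k ∈ Finset.range n, (1 - (1 + xx*yy) ^ k * (xx*yy))⁻¹) * hc

lemma gfTerm_rec (n : ℕ) :
    gfTerm (n+1) = xx * (1 + xx*yy) ^ n * gfTerm n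
      + xx * yy * (1 + xx*yy) ^ n * gfTerm (n+1) := by
  have h := gfTerm_key n
  linear_combination h

lemma gfTerm_zero : gfTerm 0 = 1 := by
  simp [gfTerm]

lemma coeff_expand2 (s t n a b : ℕ) (φ : MvPowerSeries (Fin 2) ℚ) :
    coeff (R := ℚ) (ee a b) (xx^s * yy^t * (1 + xx*yy) ^ n * φ) =
      ∑ j ∈ Finset.range (n+1), (n.choose j : ℚ) *
        (if s+j ≤ a ∧ t+j ≤ b then coeff (R := ℚ) (ee (a-(s+j)) (b-(t+j))) φ else 0) := by
  have hbin : ((1 + xx*yy) : MvPowerSeries (Fin 2) ℚ) ^ n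
      = ∑ j ∈ Finset.range (n+1), ((n.choose j : ℚ) • (xx^j * yy^j)) := by
    rw [add_comm, add_pow]
    apply Finset.sum_congr rfl
    intro j _
    rw [one_pow, mul_pow, mul_one, Nat.cast_smul_eq_nsmul, nsmul_eq_mul]
    push_cast
    ring
  rw [hbin, Finset.mul_sum, Finset.sum_mul, map_sum]
  apply Finset.sum_congr rfl
  intro j _
  have harr : xx^s * yy^t * ((n.choose j : ℚ) • (xx^j * yy^j)) * φ
      = (n.choose j : ℚ) • (xx^(s+j) * yy^(t+j) * φ) := by
    simp only [smul_mul_assoc, mul_smul_comm]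
    congr 1
    rw [pow_add, pow_add]
    ring
  rw [harr, map_smul, coeff_mono_mul]
  simp [smul_eq_mul]


end
end Biv

section Main
open Finset
lemma coeff_gfTerm (n : ℕ) : ∀ b a : ℕ, MvPowerSeries.coeff (R := ℚ) (ee a b) (gfTerm n)
    = if a = n + b then PowerSeries.coeff (R := ℚ) b (Fser n) else 0 := by
  induction n with
  | zero =>
      intro b a
      rw [gfTerm_zero, MvPowerSeries.coeff_one]
      have hF : Fser 0 = 1 := by simp [Fser]
      rw [hF, PowerSeries.coeff_one]
      by_cases h : a = 0 ∧ b = 0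
      · obtain ⟨rfl, rfl⟩ := h
        rw [if_pos ((ee_eq_zero 0 0).2 ⟨rfl, rfl⟩)]
        simp
      · rw [if_neg (fun hc => h ((ee_eq_zero a b).1 hc))]
        by_cases h2 : a = 0 + b
        · rw [if_pos h2, if_neg (by omega)]
        · rw [if_neg h2]
  | succ n ihn =>
      intro b
      induction b using Nat.strong_induction_on with
      | _ b ihb =>
      intro a
      conv_lhs => rw [gfTerm_rec n]
      rw [map_add]
      have e1 : xx * (1+xx*yy)^n * gfTerm n = xx^1 * yy^0 * (1+xx*yy)^n * gfTerm n := by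
        ring
      have e2 : xx * yy * (1+xx*yy)^n * gfTerm (n+1)
          = xx^1 * yy^1 * (1+xx*yy)^n * gfTerm (n+1) := by ring
      rw [e1, e2, coeff_expand2, coeff_expand2]
      by_cases ha : a = (n+1) + b
      · rw [if_pos ha]
        have hF : PowerSeries.coeff (R := ℚ) b (Fser (n+1))
            = (∑ j ∈ Finset.range (n+1), (n.choose j : ℚ) *
                (if 0+j ≤ b then PowerSeries.coeff (R := ℚ) (b-(0+j)) (Fser n) else 0))
            + ∑ j ∈ Finset.range (n+1), (n.choose j : ℚ) *
                (if 1+j ≤ b then PowerSeries.coeff (R := ℚ) (b-(1+j)) (Fser (n+1)) else 0) := by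
          conv_lhs => rw [Fser_rec]
          rw [map_add]
          have f1 : ((1+PowerSeries.X)^n * Fser n : PowerSeries ℚ)
              = PowerSeries.X^0 * (1+PowerSeries.X)^n * Fser n := by ring
          have f2 : (PowerSeries.X * ((1+PowerSeries.X)^n * Fser (n+1)) : PowerSeries ℚ)
              = PowerSeries.X^1 * (1+PowerSeries.X)^n * Fser (n+1) := by ring
          rw [f1, f2, coeff_expand1, coeff_expand1]
        rw [hF]
        refine congrArg₂ (· + ·) (Finset.sum_congr rfl fun j hj => ?_)
          (Finset.sum_congr rfl fun j hj => ?_)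
        · simp only [Finset.mem_range] at hj
          by_cases hjb : j ≤ b
          · rw [if_pos ⟨by omega, by omega⟩, if_pos (by omega : 0+j ≤ b), ihn]
            rw [if_pos (by omega : a - (1+j) = n + (b - (0+j)))]
          · rw [if_neg (fun hc => hjb (by omega : j ≤ b)), if_neg (by omega : ¬ 0+j ≤ b)]
        · simp only [Finset.mem_range] at hj
          by_cases hjb : 1+j ≤ b
          · rw [if_pos ⟨by omega, hjb⟩, if_pos hjb, ihb (b-(1+j)) (by omega)]
            rw [if_pos (by omega)]
          · rw [if_neg (fun hc => hjb hc.2), if_neg hjb]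
      · rw [if_neg ha]
        have z1 : ∀ j ∈ Finset.range (n+1), (n.choose j : ℚ) *
            (if 1+j ≤ a ∧ 0+j ≤ b then
              MvPowerSeries.coeff (R := ℚ) (ee (a-(1+j)) (b-(0+j))) (gfTerm n) else 0) = 0 := by
          intro j hj
          split_ifs with h
          · rw [ihn, if_neg (by omega), mul_zero]
          · rw [mul_zero]
        have z2 : ∀ j ∈ Finset.range (n+1), (n.choose j : ℚ) *
            (if 1+j ≤ a ∧ 1+j ≤ b then
              MvPowerSeries.coeff (R := ℚ) (ee (a-(1+j)) (b-(1+j))) (gfTerm (n+1)) else 0) = 0 := by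
          intro j hj
          split_ifs with h
          · rw [ihb (b-(1+j)) (by omega), if_neg (by omega), mul_zero]
          · rw [mul_zero]
        rw [Finset.sum_eq_zero z1, Finset.sum_eq_zero z2, add_zero]

lemma rhs_eval (a b : ℕ) (ha : 1 ≤ a) :
    MvPowerSeries.coeff (R := ℚ) (ee a b) (∑ n ∈ Finset.Icc 1 a, gfTerm n) =
      if b < a then PowerSeries.coeff (R := ℚ) b (Fser (a-b)) else 0 := by
  rw [map_sum, Finset.sum_congr rfl (fun n _ => coeff_gfTerm n b a)]
  by_cases hb : b < a
  · rw [if_pos hb, Finset.sum_eq_single (a-b)]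
    · rw [if_pos (by omega)]
    · intro n hn hne
      simp only [Finset.mem_Icc] at hn
      rw [if_neg (by omega)]
    · intro h
      exact absurd (Finset.mem_Icc.2 ⟨by omega, by omega⟩) h
  · rw [if_neg hb]
    apply Finset.sum_eq_zero
    intro n hn
    simp only [Finset.mem_Icc] at hn
    rw [if_neg (by omega)]
end Main

section Comb
open Finset

def emx (m : ℕ) (w : ℕ → ℕ) (i : ℕ) : ℕ := m ⊔ (Finset.range i).sup w

def csh (v : ℕ) (w : ℕ → ℕ) : ℕ → ℕ := fun i => if i = 0 then v else w (i-1)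

lemma csh_zero (v : ℕ) (w : ℕ → ℕ) : csh v w 0 = v := rfl

lemma csh_succ (v : ℕ) (w : ℕ → ℕ) (i : ℕ) : csh v w (i+1) = w i := by simp [csh]

lemma csh_inj (v : ℕ) : Function.Injective (csh v) := by
  intro w1 w2 h
  funext i
  have := congrFun h (i+1)
  rwa [csh_succ, csh_succ] at this

def ExtS (m c r j : ℕ) : Set (ℕ → ℕ) :=
  {w | (∀ i, r ≤ i → w i = 0) ∧
       (∀ i, i < r → w i ≤ emx m w i + 1) ∧
       (∀ i, i < r → w i < emx m w i → w i < (if i = 0 then c else w (i-1))) ∧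
       ((Finset.range r).filter (fun i => emx m w i < w i)).card = j}

lemma sup_range_csh (w : ℕ → ℕ) (v : ℕ) : ∀ i, (Finset.range (i+1)).sup (csh v w) = v ⊔ (Finset.range i).sup w := by
  intro i
  induction i with
  | zero => simp [csh]
  | succ i ih =>
      rw [Finset.range_add_one, Finset.sup_insert, ih, Finset.range_add_one, Finset.sup_insert,
        csh_succ]
      rw [sup_left_comm]

lemma em_csh (m v : ℕ) (w : ℕ → ℕ) (i : ℕ) : emx m (csh v w) (i+1) = emx (m ⊔ v) w i := by
  rw [emx, emx, sup_range_csh, ← sup_assoc]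

lemma em_zero (m : ℕ) (w : ℕ → ℕ) : emx m w 0 = m := by simp [emx]

lemma filter_range_succ_card (P : ℕ → Prop) [DecidablePred P] (r : ℕ) :
    ((Finset.range (r+1)).filter P).card
      = (if P 0 then 1 else 0) + ((Finset.range r).filter (fun i => P (i+1))).card := by
  induction r with
  | zero => simp [Finset.range_one, Finset.filter_singleton]; split_ifs <;> simp
  | succ r ih =>
      by_cases h : P (r+1)
      · rw [Finset.range_add_one, Finset.filter_insert, if_pos h,
          Finset.card_insert_of_notMem (by simp), ih]
        rw [show (Finset.range (r+1)) = insert r (Finset.range r) from Finset.range_add_one,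
          Finset.filter_insert, if_pos h, Finset.card_insert_of_notMem (by simp)]
        omega
      · rw [Finset.range_add_one, Finset.filter_insert, if_neg h, ih]
        rw [show (Finset.range (r+1)) = insert r (Finset.range r) from Finset.range_add_one,
          Finset.filter_insert, if_neg h]

lemma card_csh (m v r : ℕ) (w' : ℕ → ℕ) :
    ((Finset.range (r+1)).filter (fun i => emx m (csh v w') i < csh v w' i)).card
      = (if m < v then 1 else 0)
        + ((Finset.range r).filter (fun i => emx (m ⊔ v) w' i < w' i)).card := by
  rw [filter_range_succ_card]
  congr 1
  · rw [csh_zero, em_zero]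
  · congr 1
    apply Finset.filter_congr
    intro i _
    rw [em_csh, csh_succ]

lemma csh_mem (m c r v J : ℕ) (w' : ℕ → ℕ) :
    csh v w' ∈ ExtS m c (r+1) J ↔
      v ≤ m + 1 ∧ (v < m → v < c) ∧
      (if m < v then 1 else 0) ≤ J ∧ w' ∈ ExtS (m ⊔ v) v r (J - (if m < v then 1 else 0)) := by
  constructor
  · rintro ⟨hz, hb, hd, hc⟩
    have hcc := card_csh m v r w'
    rw [hc] at hcc
    refine ⟨?_, ?_, by omega, ?_, ?_, ?_, by omega⟩
    · have := hb 0 (by omega)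
      rwa [csh_zero, em_zero] at this
    · intro hlt
      have := hd 0 (by omega) (by rwa [csh_zero, em_zero])
      rwa [csh_zero, if_pos rfl] at this
    · intro i hi
      have := hz (i+1) (by omega)
      rwa [csh_succ] at this
    · intro i hi
      have := hb (i+1) (by omega)
      rwa [csh_succ, em_csh] at this
    · intro i hi hlt
      have h := hd (i+1) (by omega) (by rwa [csh_succ, em_csh])
      rw [csh_succ, if_neg (Nat.succ_ne_zero i)] at h
      exact h
  · rintro ⟨hvm, hvc, hJ, hz, hb, hd, hc⟩
    refine ⟨?_, ?_, ?_, ?_⟩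
    · intro i hi
      have h1 : i ≠ 0 := by omega
      rw [show i = (i-1)+1 from by omega, csh_succ]
      exact hz (i-1) (by omega)
    · intro i hi
      cases i with
      | zero => rw [csh_zero, em_zero]; omega
      | succ i => rw [csh_succ, em_csh]; exact hb i (by omega)
    · intro i hi hlt
      cases i with
      | zero =>
          rw [csh_zero, em_zero] at hlt
          rw [csh_zero, if_pos rfl]
          exact hvc hlt
      | succ i =>
          rw [csh_succ, em_csh] at hlt
          rw [csh_succ, if_neg (Nat.succ_ne_zero i)]
          exact hd i (by omega) hlt
    · rw [card_csh, hc]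
      omega

lemma pieceA (m c r v J : ℕ) (hvm : v ≤ m + 1) (hvc : v < m → v < c)
    (hJ : (if m < v then 1 else 0) ≤ J) :
    {w ∈ ExtS m c (r+1) J | w 0 = v}
      = csh v '' ExtS (m ⊔ v) v r (J - (if m < v then 1 else 0)) := by
  ext w
  constructor
  · rintro ⟨hw, h0⟩
    refine ⟨fun i => w (i+1), ?_, ?_⟩
    · have hcsh : csh v (fun i => w (i+1)) = w := by
        funext i
        cases i with
        | zero => rw [csh_zero, h0]
        | succ i => rw [csh_succ]
      rw [← hcsh] at hw
      exact ((csh_mem m c r v J _).1 hw).2.2.2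
    · funext i
      cases i with
      | zero => rw [csh_zero, h0]
      | succ i => rw [csh_succ]
  · rintro ⟨w', hw', rfl⟩
    exact ⟨(csh_mem m c r v J w').2 ⟨hvm, hvc, hJ, hw'⟩, csh_zero v w'⟩

lemma pieceB (m c r : ℕ) :
    {w ∈ ExtS m c (r+1) 0 | w 0 = m+1} = ∅ := by
  ext w
  simp only [Set.mem_setOf_eq, Set.mem_empty_iff_false, iff_false, not_and]
  intro hw h0
  have hcsh : csh (m+1) (fun i => w (i+1)) = w := by
    funext i
    cases i with
    | zero => rw [csh_zero, h0]
    | succ i => rw [csh_succ]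
  rw [← hcsh] at hw
  have := ((csh_mem m c r (m+1) 0 _).1 hw).2.2.1
  rw [if_pos (by omega)] at this
  omega

lemma cover (m c r J : ℕ) (hcm : c ≤ m) :
    ExtS m c (r+1) J
      = ⋃ v ∈ (insert (m+1) (insert m (Finset.range c)) : Finset ℕ),
          {w ∈ ExtS m c (r+1) J | w 0 = v} := by
  ext w
  simp only [Set.mem_iUnion, Finset.mem_insert, Finset.mem_range, exists_prop]
  constructor
  · intro hw
    refine ⟨w 0, ?_, hw, rfl⟩
    obtain ⟨hz, hb, hd, hc⟩ := hw
    have h1 := hb 0 (by omega)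
    rw [em_zero] at h1
    by_cases h2 : w 0 < m
    · have := hd 0 (by omega) (by rwa [em_zero])
      rw [if_pos rfl] at this
      right; right; exact this
    · omega
  · rintro ⟨v, _, hw, _⟩
    exact hw

lemma ncard_biUnion_finset {α ι : Type*} (A : Finset ι) (f : ι → Set α)
    (hfin : ∀ i ∈ A, (f i).Finite)
    (hdisj : ∀ i ∈ A, ∀ j ∈ A, i ≠ j → Disjoint (f i) (f j)) :
    (⋃ i ∈ A, f i).ncard = ∑ i ∈ A, (f i).ncard := by
  classical
  induction A using Finset.induction_on with
  | empty => simp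
  | @insert a A' ha ih =>
      have hfin1 := hfin a (Finset.mem_insert_self a A')
      have hfin2 : (⋃ i ∈ A', f i).Finite := by
        apply Set.Finite.biUnion A'.finite_toSet
        intro i hi
        exact hfin i (Finset.mem_insert_of_mem hi)
      have hdisj2 : Disjoint (f a) (⋃ i ∈ A', f i) := by
        apply Set.disjoint_left.2
        intro x hx hx'
        simp only [Set.mem_iUnion, exists_prop] at hx'
        obtain ⟨i, hi, hxi⟩ := hx'
        exact (Set.disjoint_left.1
          (hdisj a (Finset.mem_insert_self a A') i (Finset.mem_insert_of_mem hi)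
            (fun h => ha (h ▸ hi))) hx) hxi
      rw [Finset.set_biUnion_insert, Finset.sum_insert ha,
        Set.ncard_union_eq hdisj2 hfin1 hfin2,
        ih (fun i hi => hfin i (Finset.mem_insert_of_mem hi))
          (fun i hi j hj hne => hdisj i (Finset.mem_insert_of_mem hi)
            j (Finset.mem_insert_of_mem hj) hne)]

lemma ext_card (r : ℕ) : ∀ m c J, c ≤ m →
    (ExtS m c r J).Finite ∧ (ExtS m c r J).ncard = Nn r m c J := by
  induction r with
  | zero =>
      intro m c J hcm
      cases J with
      | zero =>
          have h : ExtS m c 0 0 = {fun _ => 0} := by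
            ext w
            simp only [ExtS, Set.mem_setOf_eq, Set.mem_singleton_iff]
            constructor
            · rintro ⟨hz, -, -, -⟩
              funext i
              exact hz i (Nat.zero_le i)
            · rintro rfl
              exact ⟨fun _ _ => rfl, fun i hi => by omega, fun i hi => by omega, by simp⟩
          rw [h]
          exact ⟨Set.finite_singleton _, by simp [Nn]⟩
      | succ J =>
          have h : ExtS m c 0 (J+1) = ∅ := by
            ext w
            simp only [ExtS, Set.mem_setOf_eq, Set.mem_empty_iff_false, iff_false]
            rintro ⟨-, -, -, hc⟩
            simp at hc
          rw [h]
          exact ⟨Set.finite_empty, by simp [Nn]⟩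
  | succ r ih =>
      intro m c J hcm
      have hcov := cover m c r J hcm
      set A : Finset ℕ := insert (m+1) (insert m (Finset.range c)) with hA
      have hpiece : ∀ v ∈ A, ({w ∈ ExtS m c (r+1) J | w 0 = v}).Finite ∧
          ({w ∈ ExtS m c (r+1) J | w 0 = v}).ncard =
            (if v = m+1 then (if J = 0 then 0 else Nn r (m+1) (m+1) (J-1))
             else Nn r m v J) := by
        intro v hv
        rw [hA] at hv
        simp only [Finset.mem_insert, Finset.mem_range] at hv
        rcases hv with rfl | hv2 | hvc
        · cases J with
          | zero =>
              rw [pieceB m c r]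
              exact ⟨Set.finite_empty, by rw [if_pos rfl, if_pos rfl, Set.ncard_empty]⟩
          | succ J =>
              have hp := pieceA m c r (m+1) (J+1) le_rfl (fun h => absurd h (by omega))
                (by rw [if_pos (by omega)]; omega)
              rw [sup_of_le_right (by omega : m ≤ m+1), if_pos (by omega : m < m+1)] at hp
              rw [hp]
              refine ⟨((ih (m+1) (m+1) (J+1-1) le_rfl).1).image _, ?_⟩
              rw [Set.ncard_image_of_injective _ (csh_inj (m+1)),
                (ih (m+1) (m+1) (J+1-1) le_rfl).2, if_pos rfl, if_neg (by omega)]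
        · rw [hv2]
          have hp := pieceA m c r m J (by omega) (fun h => absurd h (by omega))
            (by rw [if_neg (by omega)]; omega)
          rw [sup_idem, if_neg (by omega : ¬ m < m)] at hp
          rw [hp]
          refine ⟨((ih m m (J-0) le_rfl).1).image _, ?_⟩
          rw [Set.ncard_image_of_injective _ (csh_inj m),
            (ih m m (J-0) le_rfl).2, if_neg (by omega : ¬ m = m+1),
            show J - 0 = J from rfl]
        · have hp := pieceA m c r v J (by omega) (fun _ => hvc)
            (by rw [if_neg (by omega)]; omega)
          rw [sup_of_le_left (by omega : v ≤ m), if_neg (by omega : ¬ m < v)] at hp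
          rw [hp]
          refine ⟨((ih m v (J-0) (by omega)).1).image _, ?_⟩
          rw [Set.ncard_image_of_injective _ (csh_inj v),
            (ih m v (J-0) (by omega)).2, if_neg (by omega : ¬ v = m+1),
            show J - 0 = J from rfl]
      have hdisj : ∀ v ∈ A, ∀ v' ∈ A, v ≠ v' →
          Disjoint {w ∈ ExtS m c (r+1) J | w 0 = v} {w ∈ ExtS m c (r+1) J | w 0 = v'} := by
        intro v _ v' _ hne
        apply Set.disjoint_left.2
        rintro w ⟨-, h0⟩ ⟨-, h0'⟩
        exact hne (h0 ▸ h0' ▸ rfl)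
      constructor
      · rw [hcov]
        apply Set.Finite.biUnion A.finite_toSet
        intro v hv
        exact (hpiece v hv).1
      · rw [hcov, ncard_biUnion_finset A _ (fun v hv => (hpiece v hv).1) hdisj,
          Finset.sum_congr rfl (fun v hv => (hpiece v hv).2)]
        have h1 : (m+1) ∉ insert m (Finset.range c) := by
          simp only [Finset.mem_insert, Finset.mem_range]
          omega
        have h2 : m ∉ Finset.range c := by
          simp only [Finset.mem_range]
          omega
        rw [hA, Finset.sum_insert h1, Finset.sum_insert h2, if_pos rfl,
          if_neg (by omega : ¬ m = m+1),
          Finset.sum_congr rfl (fun v hv => if_neg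
            (by simp only [Finset.mem_range] at hv; omega : ¬ v = m+1))]
        cases J with
        | zero => simp [Nn, add_assoc]
        | succ J => simp [Nn, add_assoc]

lemma emx_zero_left (x : ℕ → ℕ) : emx 0 x = lmax x := by
  funext i
  simp [emx, lmax]

lemma seqset_empty (a b : ℕ) (ha : 1 ≤ a) (hb : a ≤ b) : SeqSet a b = ∅ := by
  ext x
  simp only [SeqSet, Set.mem_setOf_eq, Set.mem_empty_iff_false, iff_false]
  rintro ⟨-, -, -, -, hc⟩
  have h0 : (0:ℕ) ∈ (Finset.range a).filter (fun i => i = 0 ∨ lmax x i < x i) := by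
    simp only [Finset.mem_filter, Finset.mem_range]
    exact ⟨by omega, by simp⟩
  have := Finset.card_pos.2 ⟨0, h0⟩
  omega

lemma seqset_eq (r b : ℕ) (hb : b ≤ r) :
    SeqSet (r+1) b = {x ∈ ExtS 0 0 (r+1) (r-b) | x 0 = 0} := by
  ext x
  simp only [SeqSet, ExtS, Set.mem_setOf_eq, emx_zero_left]
  have hl0 : lmax x 0 = 0 := by simp [lmax]
  constructor
  · rintro ⟨hz, h0, hbnd, hdesc, hcard⟩
    have hP0 : ¬ (lmax x 0 < x 0) := by omega
    have he : (Finset.range (r+1)).filter (fun i => i = 0 ∨ lmax x i < x i)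
        = insert 0 ((Finset.range (r+1)).filter (fun i => lmax x i < x i)) := by
      ext i
      simp only [Finset.mem_filter, Finset.mem_range, Finset.mem_insert]
      constructor
      · rintro ⟨hir, h | h⟩
        · exact Or.inl h
        · exact Or.inr ⟨hir, h⟩
      · rintro (rfl | ⟨hir, h⟩)
        · exact ⟨by omega, by simp⟩
        · exact ⟨hir, Or.inr h⟩
    have hnot : (0:ℕ) ∉ (Finset.range (r+1)).filter (fun i => lmax x i < x i) := by
      simp only [Finset.mem_filter, Finset.mem_range]
      omega
    rw [he, Finset.card_insert_of_notMem hnot] at hcard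
    refine ⟨⟨hz, ?_, ?_, ?_⟩, h0⟩
    · intro i hi
      cases i with
      | zero => omega
      | succ i => exact hbnd (i+1) (by omega) hi
    · intro i hi hlt
      cases i with
      | zero => omega
      | succ i =>
          rw [if_neg (Nat.succ_ne_zero i)]
          exact hdesc (i+1) (by omega) hi hlt
    · omega
  · rintro ⟨⟨hz, hbnd, hdesc, hcard⟩, h0⟩
    have hP0 : ¬ (lmax x 0 < x 0) := by omega
    have he : (Finset.range (r+1)).filter (fun i => i = 0 ∨ lmax x i < x i)
        = insert 0 ((Finset.range (r+1)).filter (fun i => lmax x i < x i)) := by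
      ext i
      simp only [Finset.mem_filter, Finset.mem_range, Finset.mem_insert]
      constructor
      · rintro ⟨hir, h | h⟩
        · exact Or.inl h
        · exact Or.inr ⟨hir, h⟩
      · rintro (rfl | ⟨hir, h⟩)
        · exact ⟨by omega, by simp⟩
        · exact ⟨hir, Or.inr h⟩
    have hnot : (0:ℕ) ∉ (Finset.range (r+1)).filter (fun i => lmax x i < x i) := by
      simp only [Finset.mem_filter, Finset.mem_range]
      omega
    refine ⟨hz, h0, ?_, ?_, ?_⟩
    · intro i h1 h2
      exact hbnd i h2
    · intro i h1 h2 hlt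
      have := hdesc i h2 hlt
      rwa [if_neg (by omega)] at this
    · rw [he, Finset.card_insert_of_notMem hnot, hcard]
      omega

lemma lhs_eval (a b : ℕ) (ha : 1 ≤ a) :
    (SeqSet a b).ncard = if b < a then Nn (a-1) 0 0 (a-1-b) else 0 := by
  by_cases hb : b < a
  · rw [if_pos hb]
    obtain ⟨r, rfl⟩ : ∃ r, a = r + 1 := ⟨a-1, by omega⟩
    rw [seqset_eq r b (by omega)]
    have hp := pieceA 0 0 r 0 (r-b) (by omega) (by omega) (by simp)
    rw [sup_idem, if_neg (by omega : ¬ (0:ℕ) < 0)] at hp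
    rw [hp, Set.ncard_image_of_injective _ (csh_inj 0), (ext_card r 0 0 (r-b-0) le_rfl).2]
    congr 1 <;> omega
  · rw [if_neg hb, seqset_empty a b ha (by omega), Set.ncard_empty]

end Comb

/-- `Σ_{n≥1} Σ_k S(n,k) x^n y^k = Σ_{n≥1} x^n (1+xy)^{C(n,2)} / ∏_{k=0}^{n-1}(1-(1+xy)^k xy)`,
stated coefficient-wise: the coefficient of `x^a y^b` on the left is `S(a,b)`, and on the
right only the terms with `n ≤ a` contribute (each `gfTerm n` is divisible by `x^n`). -/
theorem stmt11 (a b : ℕ) (ha : 1 ≤ a) :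
    ((SeqSet a b).ncard : ℚ) =
      MvPowerSeries.coeff (R := ℚ) (Finsupp.single 0 a + Finsupp.single 1 b)
        (∑ n ∈ Finset.Icc 1 a, gfTerm n) := by
  have hrhs := rhs_eval a b ha
  have hlhs := lhs_eval a b ha
  rw [show (Finsupp.single 0 a + Finsupp.single 1 b : Fin 2 →₀ ℕ) = ee a b from rfl,
    hrhs, hlhs]
  by_cases hb : b < a
  · rw [if_pos hb, if_pos hb]
    have h := Nn_eq_coeff_Fser (a-b) b (by omega)
    rw [show a - b - 1 + b = a - 1 from by omega,
      show a - b - 1 = a - 1 - b from by omega] at h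
    exact h
  · rw [if_neg hb, if_neg hb, Nat.cast_zero]
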